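/- The function f : ℕ × ℕ → ℂ given by f(n,m) = n + i·m satisfies: (i) the cross-ratio equation (f(n,m) − f(n+1,m))·(f(n+1,m+1) − f(n,m+1)) = −(f(n+1,m) − f(n+1,m+1))·(f(n,m+1) − f(n,m)) for all n, m ≥ 0, with all four differences nonzero; (ii) the constraint with a = 1: f(n,m) = 2n·(f(n+1,m) − f(n,m))·(f(n,m) − f(n−1,m))/(f(n+1,m) − f(n−1,m)) + 2m·(f(n,m+1) − f(n,m))·(f(n,m) − f(n,m−1))/(f(n,m+1) − f(n,m−1)) for all n, m ≥ 1 (with nonzero denominators), together with its boundary versions in which the 2n-term is omitted when n = 0 and the 2m-term is omitted when m = 0; (iii) f(0,0) = 0, f(1,0) = 1, f(0,1) = i. Moreover it is the unique such function: any g : ℕ × ℕ → ℂ satisfying (i), (ii), (iii) equals f. -/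
import Mathlib


/-- `f : ℕ × ℕ → ℂ` is a discrete `Z^a` with `a = 1`: cross-ratio equation (with
nonzero differences), the constraint with `a = 1` (interior and boundary versions,
the `2n`-term omitted when `n = 0` and the `2m`-term omitted when `m = 0`), and
initial values `f(0,0) = 0`, `f(1,0) = 1`, `f(0,1) = i`. -/
def IsDiscreteZ1 (f : ℕ × ℕ → ℂ) : Prop :=
  (∀ n m : ℕ,
    f (n + 1, m) - f (n, m) ≠ 0 ∧ f (n, m + 1) - f (n, m) ≠ 0 ∧
    f (n + 1, m + 1) - f (n + 1, m) ≠ 0 ∧ f (n + 1, m + 1) - f (n, m + 1) ≠ 0 ∧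
    (f (n, m) - f (n + 1, m)) * (f (n + 1, m + 1) - f (n, m + 1)) =
      -((f (n + 1, m) - f (n + 1, m + 1)) * (f (n, m + 1) - f (n, m)))) ∧
  (∀ n m : ℕ,
    f (n + 2, m + 1) ≠ f (n, m + 1) ∧ f (n + 1, m + 2) ≠ f (n + 1, m) ∧
    f (n + 1, m + 1) =
      (2 * (n + 1) : ℂ) *
          ((f (n + 2, m + 1) - f (n + 1, m + 1)) * (f (n + 1, m + 1) - f (n, m + 1))) /
          (f (n + 2, m + 1) - f (n, m + 1)) +
        (2 * (m + 1) : ℂ) *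
          ((f (n + 1, m + 2) - f (n + 1, m + 1)) * (f (n + 1, m + 1) - f (n + 1, m))) /
          (f (n + 1, m + 2) - f (n + 1, m))) ∧
  (∀ n : ℕ,
    f (n + 2, 0) ≠ f (n, 0) ∧
    f (n + 1, 0) =
      (2 * (n + 1) : ℂ) * ((f (n + 2, 0) - f (n + 1, 0)) * (f (n + 1, 0) - f (n, 0))) /
        (f (n + 2, 0) - f (n, 0))) ∧
  (∀ m : ℕ,
    f (0, m + 2) ≠ f (0, m) ∧
    f (0, m + 1) =
      (2 * (m + 1) : ℂ) * ((f (0, m + 2) - f (0, m + 1)) * (f (0, m + 1) - f (0, m))) /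
        (f (0, m + 2) - f (0, m))) ∧
  f (0, 0) = 0 ∧ f (1, 0) = 1 ∧ f (0, 1) = Complex.I


open Complex in
private theorem isDiscreteZ1_model :
    IsDiscreteZ1 (fun p : ℕ × ℕ => (p.1 : ℂ) + Complex.I * (p.2 : ℂ)) := by
  refine ⟨?_, ?_, ?_, ?_, by norm_num, by norm_num, by norm_num⟩
  · intro n m
    simp only
    push_cast
    refine ⟨by intro h; simpa using congrArg Complex.re h, ?_, ?_, ?_, by push_cast; linear_combination (-1:ℂ)*Complex.I_sq⟩
    · intro h
      have := congrArg Complex.im h; simp at this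
    · intro h
      have := congrArg Complex.im h; simp at this
    · intro h; simpa using congrArg Complex.re h
  · intro n m
    simp only
    push_cast
    refine ⟨?_, ?_, ?_⟩
    · intro h; have := congrArg Complex.re h; simp at this
    · intro h; have := congrArg Complex.im h; simp at this
    · have h1 : (((n:ℂ)+2) + I*((m:ℂ)+1)) - ((n:ℂ) + I*((m:ℂ)+1)) = 2 := by ring
      have h2 : (((n:ℂ)+1) + I*((m:ℂ)+2)) - (((n:ℂ)+1) + I*(m:ℂ)) = 2*I := by ring
      rw [h1, h2]
      field_simp
      ring_nf
  · intro n
    simp only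
    push_cast
    refine ⟨?_, ?_⟩
    · intro h; have := congrArg Complex.re h; simp at this
    · have h1 : (((n:ℂ)+2) + I*(0:ℂ)) - ((n:ℂ) + I*(0:ℂ)) = 2 := by push_cast; ring
      rw [h1]
      field_simp
      ring
  · intro m
    simp only
    push_cast
    refine ⟨?_, ?_⟩
    · intro h; have := congrArg Complex.im h; simp at this
    · have h1 : ((0:ℂ) + I*((m:ℂ)+2)) - ((0:ℂ) + I*(m:ℂ)) = 2*I := by push_cast; ring
      rw [h1]
      field_simp
      ring_nf

open Complex in
private theorem discreteZ1_uniq : ∀ g : ℕ × ℕ → ℂ, IsDiscreteZ1 g →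
      g = fun p : ℕ × ℕ => (p.1 : ℂ) + Complex.I * (p.2 : ℂ) := by
  intro g hg
  obtain ⟨hcr, hint, hbn, hbm, h00, h10, h01⟩ := hg
  have hcast : ∀ k : ℕ, ((k : ℂ) + 1) ≠ 0 := by
    intro k
    exact_mod_cast Nat.cast_ne_zero (R := ℂ).mpr (Nat.succ_ne_zero k)
  -- the bottom row
  have hrow : ∀ n : ℕ, g (n, 0) = (n : ℂ) := by
    have key : ∀ n : ℕ, g (n, 0) = (n : ℂ) ∧ g (n + 1, 0) = ((n : ℂ) + 1) := by
      intro n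
      induction n with
      | zero => exact ⟨by simpa using h00, by simpa using h10⟩
      | succ k ih =>
        obtain ⟨ih1, ih2⟩ := ih
        refine ⟨by push_cast; exact ih2, ?_⟩
        obtain ⟨hne, heq⟩ := hbn k
        rw [ih1] at hne heq
        rw [ih2] at heq
        have hsub : g (k + 2, 0) - (k : ℂ) ≠ 0 := sub_ne_zero.mpr hne
        rw [eq_div_iff hsub] at heq
        have hz : ((k : ℂ) + 1) * (g (k + 2, 0) - ((k : ℂ) + 2)) = 0 := by
          push_cast at heq ⊢
          linear_combination -heq
        rcases mul_eq_zero.mp hz with h | h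
        · exact absurd h (hcast k)
        · push_cast
          linear_combination h
    intro n; exact (key n).1
  -- the left column
  have hcol : ∀ m : ℕ, g (0, m) = Complex.I * (m : ℂ) := by
    have key : ∀ m : ℕ, g (0, m) = I * (m : ℂ) ∧ g (0, m + 1) = I * ((m : ℂ) + 1) := by
      intro m
      induction m with
      | zero => exact ⟨by simpa using h00, by simpa using h01⟩
      | succ k ih =>
        obtain ⟨ih1, ih2⟩ := ih
        refine ⟨by push_cast; exact ih2, ?_⟩
        obtain ⟨hne, heq⟩ := hbm k
        rw [ih1] at hne heq
        rw [ih2] at heq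
        have hsub : g (0, k + 2) - I * (k : ℂ) ≠ 0 := sub_ne_zero.mpr hne
        rw [eq_div_iff hsub] at heq
        have hz : (((k : ℂ) + 1) * I) * (g (0, k + 2) - I * ((k : ℂ) + 2)) = 0 := by
          push_cast at heq ⊢
          linear_combination -heq
        rcases mul_eq_zero.mp hz with h | h
        · rcases mul_eq_zero.mp h with h' | h'
          · exact absurd h' (hcast k)
          · exact absurd h' I_ne_zero
        · push_cast
          linear_combination h
    intro m; exact (key m).1
  -- full induction
  have hmain : ∀ m n : ℕ, g (n, m) = (n : ℂ) + I * (m : ℂ) := by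
    intro m
    induction m with
    | zero => intro n; simpa using hrow n
    | succ k ih =>
      intro n
      induction n with
      | zero => simpa using hcol (k + 1)
      | succ j ihn =>
        obtain ⟨-, -, -, -, hceq⟩ := hcr j k
        rw [ih j, ih (j + 1), ihn] at hceq
        have hz : ((1 : ℂ) + I) * (g (j + 1, k + 1) - (((j : ℂ) + 1) + I * ((k : ℂ) + 1))) = 0 := by
          push_cast at hceq ⊢
          linear_combination -hceq - Complex.I_sq
        rcases mul_eq_zero.mp hz with h | h
        · exfalso
          have := congrArg Complex.re h
          simp at this
        · push_cast
          linear_combination h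
  funext p
  obtain ⟨n, m⟩ := p
  exact hmain m n

/-- The function `f(n,m) = n + i m` is the discrete `Z^a` for `a = 1`, and it is the
unique function with these properties. -/
theorem discrete_Z1_eq_n_add_im :
    IsDiscreteZ1 (fun p : ℕ × ℕ => (p.1 : ℂ) + Complex.I * (p.2 : ℂ)) ∧
    ∀ g : ℕ × ℕ → ℂ, IsDiscreteZ1 g →
      g = fun p : ℕ × ℕ => (p.1 : ℂ) + Complex.I * (p.2 : ℂ) := ⟨isDiscreteZ1_model, discreteZ1_uniq⟩
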